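/- arXiv:1505.03923 — 3 statements merged into one kernel-verified Lean document; each statement's English description precedes it below -/
import Mathlib

section
/- Let (X, μ) be a measure space, V : X → [0,∞) measurable, and W : [0,∞) → [0,∞) monotone nondecreasing and right-continuous with W(0) = 0. Let W⁻¹(t) = inf{s ≥ 0 : W(s) ≥ t}. Then for every λ ≥ 0, ∫_X W((λ - V(x))⁺) dμ(x) = ∫₀^{W(λ)} μ({x : V(x) ≤ λ - W⁻¹(t)}) dt, where (a)⁺ = max(a,0). -/
open MeasureTheory

theorem stmt_3 {X : Type*} [MeasurableSpace X] (μ : Measure X)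
    (V : X → ℝ) (hV0 : ∀ x, 0 ≤ V x) (hV : Measurable V)
    (W : ℝ → ℝ) (hWmono : Monotone W) (hWnonneg : ∀ s, 0 ≤ W s)
    (hWrc : ∀ s : ℝ, ContinuousWithinAt W (Set.Ici s) s)
    (hW0 : ∀ s ≤ (0:ℝ), W s = 0) :
    ∀ lam ≥ (0:ℝ),
      ∫⁻ x, ENNReal.ofReal (W (max (lam - V x) 0)) ∂μ
        = ∫⁻ t in Set.Ioc (0:ℝ) (W lam),
            μ {x | V x ≤ lam - sInf {s : ℝ | 0 ≤ s ∧ t ≤ W s}} := by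
  intro lam hlam
  have hW00 : W 0 = 0 := hW0 0 le_rfl
  have hg : Measurable fun x => W (max (lam - V x) 0) :=
    hWmono.measurable.comp ((measurable_const.sub hV).max measurable_const)
  rw [lintegral_eq_lintegral_meas_le μ
      (Filter.Eventually.of_forall fun x => hWnonneg _) hg.aemeasurable]
  have hsplit : Set.Ioi (0:ℝ) = Set.Ioc 0 (W lam) ∪ Set.Ioi (W lam) :=
    (Set.Ioc_union_Ioi_eq_Ioi (hWnonneg lam)).symm
  rw [hsplit, lintegral_union measurableSet_Ioi Set.Ioc_disjoint_Ioi_same]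
  have h2 : ∫⁻ t in Set.Ioi (W lam), μ {x | t ≤ W (max (lam - V x) 0)} = 0 := by
    rw [setLIntegral_congr_fun measurableSet_Ioi
        (fun t (ht : t ∈ Set.Ioi (W lam)) => ?_),
      lintegral_zero]
    have hempty : {x | t ≤ W (max (lam - V x) 0)} = (∅ : Set X) := by
      ext x
      simp only [Set.mem_setOf_eq, Set.mem_empty_iff_false, iff_false, not_le]
      calc W (max (lam - V x) 0) ≤ W lam := hWmono (max_le (by linarith [hV0 x]) hlam)
        _ < t := ht
    simp [hempty]
  rw [h2, add_zero]
  apply setLIntegral_congr_fun measurableSet_Ioc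
  intro t ht
  beta_reduce
  congr 1
  set S := {s : ℝ | 0 ≤ s ∧ t ≤ W s} with hS
  have hSne : S.Nonempty := ⟨lam, hlam, ht.2⟩
  have hbdd : BddBelow S := ⟨0, fun s hs => hs.1⟩
  have hm0 : 0 ≤ sInf S := le_csInf hSne fun s hs => hs.1
  have hmem : t ≤ W (sInf S) := by
    have hall : ∀ s ∈ Set.Ioi (sInf S), t ≤ W s := by
      intro s hs
      obtain ⟨u, huS, hus⟩ := (csInf_lt_iff hbdd hSne).mp hs
      exact le_trans huS.2 (hWmono hus.le)
    have htend : Filter.Tendsto W (nhdsWithin (sInf S) (Set.Ioi (sInf S)))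
        (nhds (W (sInf S))) :=
      (hWrc (sInf S)).mono_left (nhdsWithin_mono _ Set.Ioi_subset_Ici_self)
    exact ge_of_tendsto htend
      (eventually_nhdsWithin_of_forall hall)
  have hmpos : 0 < sInf S := by
    rcases hm0.lt_or_eq with h | h
    · exact h
    · exfalso; rw [← h, hW00] at hmem; linarith [ht.1]
  ext x
  simp only [Set.mem_setOf_eq]
  constructor
  · intro hx
    have h1 : sInf S ≤ max (lam - V x) 0 := csInf_le hbdd ⟨le_max_right _ _, hx⟩
    rw [le_max_iff] at h1
    rcases h1 with h1 | h1
    · linarith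
    · linarith
  · intro hx
    calc t ≤ W (sInf S) := hmem
      _ ≤ W (max (lam - V x) 0) := hWmono (le_trans (by linarith) (le_max_left _ _))
end

section
/- Let F∧, F∨ : [0,∞) → [0,∞) be nondecreasing with F∧ ≤ F∨, F∧ not identically 0, and suppose there exist C > 0 and λ₀ > 0 such that F∨(λ) ≤ C·F∧(λ/2) for all λ ≥ λ₀. Define ℱ^b(t) = ∫₀^∞ F^b(λ)·t·e^{-tλ} dλ for b ∈ {∧,∨}. Then limsup_{t→0⁺} ℱ∨(t)/ℱ∧(t) ≤ C, provided that ℱ∧(2t) → ∞ as t → 0⁺. -/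
open MeasureTheory

lemma scale_lintegral (g : ℝ → ENNReal) :
    ∫⁻ x in Set.Ioi (0:ℝ), g x = 2 * ∫⁻ x in Set.Ioi (0:ℝ), g (2 * x) := by
  have he : MeasurableEmbedding (fun x : ℝ => (2:ℝ) * x) :=
    (Homeomorph.mulLeft₀ (2:ℝ) two_ne_zero).toMeasurableEquiv.measurableEmbedding
  have hmap := Real.map_volume_mul_left (a := 2) two_ne_zero
  have h1 : ∫⁻ x, Set.indicator (Set.Ioi (0:ℝ)) g x
      = 2 * ∫⁻ x, Set.indicator (Set.Ioi (0:ℝ)) g (2 * x) := by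
    have := he.lintegral_map (f := Set.indicator (Set.Ioi (0:ℝ)) g) (μ := volume)
    rw [hmap] at this
    simp only [lintegral_smul_measure, smul_eq_mul] at this
    rw [← this, ← mul_assoc]
    have h2 : (2:ENNReal) * ENNReal.ofReal |2⁻¹| = 1 := by
      rw [abs_of_pos (by norm_num), ENNReal.ofReal_inv_of_pos (by norm_num)]
      norm_num
      rw [ENNReal.mul_inv_cancel] <;> norm_num
    rw [h2, one_mul]
  have hmeas : MeasurableSet (Set.Ioi (0:ℝ)) := measurableSet_Ioi
  rw [← lintegral_indicator hmeas, ← lintegral_indicator hmeas, h1]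
  congr 1
  apply lintegral_congr
  intro x
  by_cases hx : x ∈ Set.Ioi (0:ℝ)
  · have : (2:ℝ) * x ∈ Set.Ioi (0:ℝ) := by simp at hx ⊢; linarith
    simp [Set.indicator_of_mem, hx, this]
  · have : (2:ℝ) * x ∉ Set.Ioi (0:ℝ) := by simp at hx ⊢; linarith
    simp [Set.indicator_of_notMem, hx, this]

theorem stmt_6 (Fwedge Fvee : ℝ → ℝ)
    (hw : MonotoneOn Fwedge (Set.Ici 0)) (hv : MonotoneOn Fvee (Set.Ici 0))
    (hnn : ∀ lam ≥ (0:ℝ), 0 ≤ Fwedge lam)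
    (hle : ∀ lam ≥ (0:ℝ), Fwedge lam ≤ Fvee lam)
    (hne : ∃ lam ≥ (0:ℝ), Fwedge lam ≠ 0)
    (C lam₀ : ℝ) (hC : 0 < C) (hlam₀ : 0 < lam₀)
    (hdom : ∀ lam ≥ lam₀, Fvee lam ≤ C * Fwedge (lam / 2))
    (LF : (ℝ → ℝ) → ℝ → ENNReal)
    (hLF : ∀ F t, LF F t
      = ∫⁻ lam in Set.Ioi (0:ℝ), ENNReal.ofReal (F lam * t * Real.exp (-t * lam)))
    (hinf : Filter.Tendsto (fun t => LF Fwedge (2 * t)) (nhdsWithin 0 (Set.Ioi 0)) (nhds ⊤)) :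
    Filter.limsup (fun t => LF Fvee t / LF Fwedge t) (nhdsWithin 0 (Set.Ioi 0))
      ≤ ENNReal.ofReal C := by
  have hvnn : ∀ lam ≥ (0:ℝ), 0 ≤ Fvee lam := fun lam h => (hnn lam h).trans (hle lam h)
  -- key2 : LF Fwedge (2*t) ≤ LF Fwedge t for t > 0
  have key2 : ∀ t : ℝ, 0 < t → LF Fwedge (2 * t) ≤ LF Fwedge t := by
    intro t ht
    rw [hLF, hLF]
    calc ∫⁻ lam in Set.Ioi (0:ℝ), ENNReal.ofReal (Fwedge lam * (2*t) * Real.exp (-(2*t) * lam))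
        = 2 * ∫⁻ lam in Set.Ioi (0:ℝ),
            ENNReal.ofReal (Fwedge lam * t * Real.exp (-(2*t) * lam)) := by
          rw [← lintegral_const_mul' 2 _ (by norm_num)]
          apply lintegral_congr
          intro lam
          rw [← ENNReal.ofReal_ofNat, ← ENNReal.ofReal_mul (by norm_num)]
          congr 1; ring
      _ ≤ 2 * ∫⁻ lam in Set.Ioi (0:ℝ),
            ENNReal.ofReal (Fwedge (2*lam) * t * Real.exp (-t * (2*lam))) := by
          refine mul_le_mul_right ?_ 2
          refine lintegral_mono_ae (ae_restrict_of_forall_mem measurableSet_Ioi ?_)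
          intro lam hlam
          simp only [Set.mem_Ioi] at hlam
          apply ENNReal.ofReal_le_ofReal
          have h1 : Fwedge lam ≤ Fwedge (2*lam) :=
            hw (le_of_lt hlam) (by simp; linarith) (by linarith)
          have h2 : -(2*t)*lam = -t*(2*lam) := by ring
          rw [← h2]
          exact mul_le_mul_of_nonneg_right (mul_le_mul_of_nonneg_right h1 ht.le)
            (Real.exp_pos (-(2*t)*lam)).le
      _ = ∫⁻ lam in Set.Ioi (0:ℝ), ENNReal.ofReal (Fwedge lam * t * Real.exp (-t * lam)) := by
          rw [scale_lintegral (fun lam => ENNReal.ofReal (Fwedge lam * t * Real.exp (-t * lam)))]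
  -- key1
  have key1 : ∀ t : ℝ, 0 < t →
      LF Fvee t ≤ ENNReal.ofReal (Fvee lam₀ * lam₀ * t) + ENNReal.ofReal C * LF Fwedge (2*t) := by
    intro t ht
    rw [hLF, hLF]
    have hsplit : Set.Ioi (0:ℝ) = Set.Ioc 0 lam₀ ∪ Set.Ioi lam₀ :=
      (Set.Ioc_union_Ioi_eq_Ioi hlam₀.le).symm
    have hsum : ∫⁻ lam in Set.Ioi (0:ℝ), ENNReal.ofReal (Fvee lam * t * Real.exp (-t * lam))
        = (∫⁻ lam in Set.Ioc (0:ℝ) lam₀, ENNReal.ofReal (Fvee lam * t * Real.exp (-t * lam)))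
          + ∫⁻ lam in Set.Ioi lam₀, ENNReal.ofReal (Fvee lam * t * Real.exp (-t * lam)) := by
      rw [hsplit, lintegral_union measurableSet_Ioi Set.Ioc_disjoint_Ioi_same]
    rw [hsum]
    gcongr
    · -- small part
      calc ∫⁻ lam in Set.Ioc (0:ℝ) lam₀, ENNReal.ofReal (Fvee lam * t * Real.exp (-t * lam))
          ≤ ∫⁻ _lam in Set.Ioc (0:ℝ) lam₀, ENNReal.ofReal (Fvee lam₀ * t) := by
            refine setLIntegral_mono measurable_const ?_
            intro lam hlam
            simp only [Set.mem_Ioc] at hlam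
            apply ENNReal.ofReal_le_ofReal
            have h1 : Fvee lam ≤ Fvee lam₀ := hv hlam.1.le hlam₀.le hlam.2
            have h2 : Real.exp (-t * lam) ≤ 1 := by
              rw [Real.exp_le_one_iff]; nlinarith
            have h4 := mul_le_of_le_one_right (mul_nonneg (hvnn lam hlam.1.le) ht.le) h2
            have h5 := mul_le_mul_of_nonneg_right h1 ht.le
            linarith
        _ = ENNReal.ofReal (Fvee lam₀ * t) * ENNReal.ofReal lam₀ := by
            rw [setLIntegral_const, Real.volume_Ioc]; norm_num
        _ = ENNReal.ofReal (Fvee lam₀ * lam₀ * t) := by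
            rw [← ENNReal.ofReal_mul (mul_nonneg (hvnn lam₀ hlam₀.le) ht.le)]
            congr 1; ring
    · -- tail part
      calc ∫⁻ lam in Set.Ioi lam₀, ENNReal.ofReal (Fvee lam * t * Real.exp (-t * lam))
          ≤ ∫⁻ lam in Set.Ioi lam₀, ENNReal.ofReal (C * Fwedge (lam/2) * t * Real.exp (-t * lam)) := by
            refine lintegral_mono_ae (ae_restrict_of_forall_mem measurableSet_Ioi ?_)
            intro lam hlam
            simp only [Set.mem_Ioi] at hlam
            apply ENNReal.ofReal_le_ofReal
            have h1 : Fvee lam ≤ C * Fwedge (lam/2) := hdom lam hlam.le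
            exact mul_le_mul_of_nonneg_right (mul_le_mul_of_nonneg_right h1 ht.le)
              (Real.exp_pos (-t * lam)).le
        _ ≤ ∫⁻ lam in Set.Ioi (0:ℝ), ENNReal.ofReal (C * Fwedge (lam/2) * t * Real.exp (-t * lam)) :=
            lintegral_mono_set (Set.Ioi_subset_Ioi hlam₀.le)
        _ = 2 * ∫⁻ lam in Set.Ioi (0:ℝ),
              ENNReal.ofReal (C * Fwedge lam * t * Real.exp (-t * (2*lam))) := by
            rw [scale_lintegral
              (fun lam => ENNReal.ofReal (C * Fwedge (lam/2) * t * Real.exp (-t * lam)))]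
            congr 1
            apply lintegral_congr
            intro lam
            norm_num
        _ = ENNReal.ofReal C * ∫⁻ lam in Set.Ioi (0:ℝ),
              ENNReal.ofReal (Fwedge lam * (2*t) * Real.exp (-(2*t) * lam)) := by
            rw [← lintegral_const_mul' _ _ ENNReal.ofReal_ne_top,
                ← lintegral_const_mul' 2 _ (by norm_num)]
            apply lintegral_congr
            intro lam
            rw [← ENNReal.ofReal_ofNat, ← ENNReal.ofReal_mul (by norm_num),
                ← ENNReal.ofReal_mul hC.le]
            congr 1; ring
  -- limsup
  refine ENNReal.le_of_forall_pos_le_add ?_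
  intro ε hε _
  refine Filter.limsup_le_of_le ?_ ?_
  · isBoundedDefault
  set A := ENNReal.ofReal (Fvee lam₀ * lam₀) with hA
  have hAtop : A * (ε:ENNReal)⁻¹ < ⊤ :=
    ENNReal.mul_lt_top ENNReal.ofReal_lt_top (ENNReal.inv_lt_top.2 (by exact_mod_cast hε))
  have hev1 : ∀ᶠ t in nhdsWithin 0 (Set.Ioi 0), (0:ℝ) < t := self_mem_nhdsWithin
  have hev2 : ∀ᶠ t in nhdsWithin 0 (Set.Ioi 0), t ≤ (1:ℝ) := by
    filter_upwards [(isOpen_Iio.eventually_mem (show (0:ℝ) ∈ Set.Iio 1 by norm_num)).filter_mono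
      nhdsWithin_le_nhds] with t ht
    exact le_of_lt ht
  have hev3 : ∀ᶠ t in nhdsWithin 0 (Set.Ioi 0), A * (ε:ENNReal)⁻¹ < LF Fwedge (2 * t) :=
    hinf.eventually (isOpen_Ioi.eventually_mem (Set.mem_Ioi.2 hAtop))
  filter_upwards [hev1, hev2, hev3] with t ht ht1 hbig
  have hY : A * (ε:ENNReal)⁻¹ ≤ LF Fwedge (2 * t) := hbig.le
  have hYX : LF Fwedge (2 * t) ≤ LF Fwedge t := key2 t ht
  calc LF Fvee t / LF Fwedge t
      ≤ (ENNReal.ofReal (Fvee lam₀ * lam₀ * t) + ENNReal.ofReal C * LF Fwedge (2*t))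
          / LF Fwedge t := ENNReal.div_le_div (key1 t ht) le_rfl
    _ = ENNReal.ofReal (Fvee lam₀ * lam₀ * t) / LF Fwedge t
          + ENNReal.ofReal C * LF Fwedge (2*t) / LF Fwedge t := ENNReal.add_div
    _ ≤ A / LF Fwedge (2*t) + ENNReal.ofReal C * (LF Fwedge t / LF Fwedge t) := by
        apply add_le_add
        · refine ENNReal.div_le_div (ENNReal.ofReal_le_ofReal ?_) hYX
          exact mul_le_of_le_one_right (mul_nonneg (hvnn lam₀ hlam₀.le) hlam₀.le) ht1
        · rw [mul_div_assoc]
          exact mul_le_mul_right (ENNReal.div_le_div hYX le_rfl) _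
    _ ≤ (ε:ENNReal) + ENNReal.ofReal C * 1 := by
        gcongr
        · refine ENNReal.div_le_of_le_mul ?_
          calc A = (ε:ENNReal) * (A * (ε:ENNReal)⁻¹) := by
                rw [← mul_assoc, mul_comm (ε:ENNReal) A, mul_assoc,
                  ENNReal.mul_inv_cancel (by exact_mod_cast hε.ne') ENNReal.coe_ne_top, mul_one]
            _ ≤ (ε:ENNReal) * LF Fwedge (2*t) := mul_le_mul_right hY _
        · exact ENNReal.div_self_le_one
    _ = ENNReal.ofReal C + (ε:ENNReal) := by rw [mul_one, add_comm]
end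

section
/- Let 0 ≤ F∧ ≤ F∨ be nondecreasing functions on [0,∞) with F∨(λ)/F∧(λ) → 1 as λ → ∞ and F∧ > 0 eventually, and suppose ℱ∧(t) := ∫₀^∞ F∧(λ) t e^{-tλ} dλ → ∞ as t ↓ 0. Then ℱ∨(t)/ℱ∧(t) → 1 as t ↓ 0, where ℱ∨(t) := ∫₀^∞ F∨(λ) t e^{-tλ} dλ. -/
open MeasureTheory

theorem stmt_17 (Fwedge Fvee : ℝ → ℝ)
    (hw : MonotoneOn Fwedge (Set.Ici 0)) (hv : MonotoneOn Fvee (Set.Ici 0))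
    (hwnn : ∀ lam ≥ (0:ℝ), 0 ≤ Fwedge lam)
    (hle : ∀ lam ≥ (0:ℝ), Fwedge lam ≤ Fvee lam)
    (lam₁ : ℝ) (hpos : ∀ lam ≥ lam₁, 0 < Fwedge lam)
    (hratio : Filter.Tendsto (fun lam => Fvee lam / Fwedge lam) Filter.atTop (nhds 1))
    (LFw LFv : ℝ → ENNReal)
    (hLFw : ∀ t, LFw t
      = ∫⁻ lam in Set.Ioi (0:ℝ), ENNReal.ofReal (Fwedge lam * t * Real.exp (-t * lam)))
    (hLFv : ∀ t, LFv t
      = ∫⁻ lam in Set.Ioi (0:ℝ), ENNReal.ofReal (Fvee lam * t * Real.exp (-t * lam)))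
    (hfinw : ∀ t > (0:ℝ), LFw t < ⊤) (hfinv : ∀ t > (0:ℝ), LFv t < ⊤)
    (hinf : Filter.Tendsto LFw (nhdsWithin 0 (Set.Ioi 0)) (nhds ⊤)) :
    Filter.Tendsto (fun t => (LFv t).toReal / (LFw t).toReal)
      (nhdsWithin 0 (Set.Ioi 0)) (nhds 1) := by
  have hvnn : ∀ lam ≥ (0:ℝ), 0 ≤ Fvee lam := fun lam h => (hwnn lam h).trans (hle lam h)
  rw [Metric.tendsto_nhds]
  intro ε hε
  set δ := ε/2 with hδdef
  have hδ : 0 < δ := by positivity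
  have h1 : ∀ᶠ lam in Filter.atTop, Fvee lam / Fwedge lam < 1 + δ :=
    hratio.eventually (eventually_lt_nhds (by linarith))
  obtain ⟨Λ₀, hΛ₀⟩ := Filter.eventually_atTop.mp h1
  set Λ := max Λ₀ (max lam₁ 0) with hΛdef
  have hΛ0 : (0:ℝ) ≤ Λ := le_max_of_le_right (le_max_right _ _)
  have hΛ1 : lam₁ ≤ Λ := le_max_of_le_right (le_max_left _ _)
  have key : ∀ lam, Λ ≤ lam → Fvee lam ≤ (1+δ) * Fwedge lam := by
    intro lam hlam
    have hw' : 0 < Fwedge lam := hpos lam (hΛ1.trans hlam)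
    have h2 := hΛ₀ lam ((le_max_left _ _).trans hlam)
    have h3 : Fvee lam / Fwedge lam * Fwedge lam = Fvee lam := by field_simp
    nlinarith [hw'.le]
  set C := Fvee Λ * Λ with hCdef
  have hCnn : 0 ≤ C := mul_nonneg (hvnn Λ hΛ0) hΛ0
  -- lower bound
  have hBle : ∀ t > (0:ℝ), LFw t ≤ LFv t := by
    intro t ht
    rw [hLFw, hLFv]
    refine lintegral_mono_ae ?_
    filter_upwards [ae_restrict_mem measurableSet_Ioi] with lam hlam
    have h0 : (0:ℝ) ≤ lam := le_of_lt hlam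
    refine ENNReal.ofReal_le_ofReal ?_
    have he : 0 ≤ t * Real.exp (-t*lam) := by positivity
    rw [mul_assoc, mul_assoc]
    exact mul_le_mul_of_nonneg_right (hle lam h0) he
  -- upper bound
  have hAle : ∀ t, 0 < t →
      LFv t ≤ ENNReal.ofReal (C*t) + ENNReal.ofReal (1+δ) * LFw t := by
    intro t ht
    rw [hLFv, hLFw]
    have step : ∀ lam ∈ Set.Ioi (0:ℝ),
        ENNReal.ofReal (Fvee lam * t * Real.exp (-t*lam))
          ≤ (Set.Ioc 0 Λ).indicator (fun _ => ENNReal.ofReal (Fvee Λ * t)) lam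
            + ENNReal.ofReal ((1+δ) * (Fwedge lam * t * Real.exp (-t*lam))) := by
      intro lam hlam
      simp only [Set.mem_Ioi] at hlam
      by_cases hc : lam ≤ Λ
      · have hmem : lam ∈ Set.Ioc 0 Λ := ⟨hlam, hc⟩
        rw [Set.indicator_of_mem hmem]
        refine le_add_of_le_of_nonneg (ENNReal.ofReal_le_ofReal ?_) zero_le
        have he1 : Real.exp (-t*lam) ≤ 1 := Real.exp_le_one_iff.mpr (by nlinarith)
        have hv1 : Fvee lam ≤ Fvee Λ := hv (le_of_lt hlam) hΛ0 hc
        calc Fvee lam * t * Real.exp (-t*lam) ≤ Fvee lam * t * 1 :=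
              mul_le_mul_of_nonneg_left he1 (mul_nonneg (hvnn lam hlam.le) ht.le)
          _ = Fvee lam * t := mul_one _
          _ ≤ Fvee Λ * t := mul_le_mul_of_nonneg_right hv1 ht.le
      · push_neg at hc
        refine le_add_of_nonneg_of_le zero_le (ENNReal.ofReal_le_ofReal ?_)
        have hk := key lam hc.le
        have he : 0 ≤ t * Real.exp (-t*lam) := by positivity
        calc Fvee lam * t * Real.exp (-t*lam) = Fvee lam * (t * Real.exp (-t*lam)) := by ring
        _ ≤ ((1+δ) * Fwedge lam) * (t * Real.exp (-t*lam)) := mul_le_mul_of_nonneg_right hk he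
        _ = (1+δ) * (Fwedge lam * t * Real.exp (-t*lam)) := by ring
    calc ∫⁻ lam in Set.Ioi (0:ℝ), ENNReal.ofReal (Fvee lam * t * Real.exp (-t*lam))
        ≤ ∫⁻ lam in Set.Ioi (0:ℝ),
            ((Set.Ioc 0 Λ).indicator (fun _ => ENNReal.ofReal (Fvee Λ * t)) lam
            + ENNReal.ofReal ((1+δ) * (Fwedge lam * t * Real.exp (-t*lam)))) := by
          refine lintegral_mono_ae ?_
          filter_upwards [ae_restrict_mem measurableSet_Ioi] with lam hlam using step lam hlam
      _ = (∫⁻ lam in Set.Ioi (0:ℝ),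
            (Set.Ioc 0 Λ).indicator (fun _ => ENNReal.ofReal (Fvee Λ * t)) lam)
          + ∫⁻ lam in Set.Ioi (0:ℝ),
            ENNReal.ofReal ((1+δ) * (Fwedge lam * t * Real.exp (-t*lam))) :=
          lintegral_add_left ((measurable_const.indicator measurableSet_Ioc)) _
      _ ≤ ENNReal.ofReal (C*t) + ENNReal.ofReal (1+δ)
            * ∫⁻ lam in Set.Ioi (0:ℝ),
                ENNReal.ofReal (Fwedge lam * t * Real.exp (-t*lam)) := by
          gcongr
          · rw [lintegral_indicator measurableSet_Ioc, Measure.restrict_restrict measurableSet_Ioc,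
              lintegral_const, Measure.restrict_apply MeasurableSet.univ, Set.univ_inter]
            have hμ : (volume (Set.Ioc 0 Λ ∩ Set.Ioi 0) : ENNReal) ≤ ENNReal.ofReal Λ := by
              refine le_trans (measure_mono Set.inter_subset_left) ?_
              rw [Real.volume_Ioc]
              exact ENNReal.ofReal_le_ofReal (by linarith)
            calc ENNReal.ofReal (Fvee Λ * t) * volume (Set.Ioc 0 Λ ∩ Set.Ioi 0)
                ≤ ENNReal.ofReal (Fvee Λ * t) * ENNReal.ofReal Λ := by gcongr
              _ = ENNReal.ofReal (C*t) := by
                  rw [← ENNReal.ofReal_mul (mul_nonneg (hvnn Λ hΛ0) ht.le)]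
                  rw [hCdef]; ring_nf
          · have : ∀ lam : ℝ, ENNReal.ofReal ((1+δ) * (Fwedge lam * t * Real.exp (-t*lam)))
                = ENNReal.ofReal (1+δ) * ENNReal.ofReal (Fwedge lam * t * Real.exp (-t*lam)) :=
              fun lam => ENNReal.ofReal_mul (by linarith)
            simp_rw [this]
            rw [lintegral_const_mul' _ _ ENNReal.ofReal_ne_top]
  -- toReal of LFw tends to atTop
  have hatop : Filter.Tendsto (fun t => (LFw t).toReal) (nhdsWithin 0 (Set.Ioi 0))
      Filter.atTop := by
    rw [Filter.tendsto_atTop]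
    intro M
    have h2 : ∀ᶠ t in nhdsWithin 0 (Set.Ioi 0), ENNReal.ofReal M < LFw t :=
      hinf.eventually (eventually_gt_nhds ENNReal.ofReal_lt_top)
    filter_upwards [h2, self_mem_nhdsWithin] with t hM ht
    have hfin := hfinw t ht
    have h5 : (ENNReal.ofReal M).toReal ≤ (LFw t).toReal := ENNReal.toReal_mono hfin.ne hM.le
    rw [ENNReal.toReal_ofReal'] at h5
    exact (le_max_left M 0).trans h5
  -- conclude
  have h3 : ∀ᶠ t in nhdsWithin 0 (Set.Ioi 0), max (C/δ) 1 < (LFw t).toReal :=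
    hatop.eventually_gt_atTop _
  have h4 : ∀ᶠ t : ℝ in nhdsWithin 0 (Set.Ioi 0), t < 1 :=
    Filter.Eventually.filter_mono nhdsWithin_le_nhds (eventually_lt_nhds (show (0:ℝ) < 1 by norm_num))
  filter_upwards [h3, h4, self_mem_nhdsWithin] with t ha' ht1 ht
  simp only [Set.mem_Ioi] at ht
  set a := (LFw t).toReal with hadef
  set b := (LFv t).toReal with hbdef
  have ha1 : 1 < a := lt_of_le_of_lt (le_max_right _ _) ha'
  have ha0 : 0 < a := by linarith
  have hab : a ≤ b := ENNReal.toReal_mono (hfinv t ht).ne (hBle t ht)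
  have hupper : b ≤ C*t + (1+δ)*a := by
    have h5 := hAle t ht
    have hrhs : (ENNReal.ofReal (C*t) + ENNReal.ofReal (1+δ) * LFw t) ≠ ⊤ := by
      refine ENNReal.add_ne_top.mpr ⟨ENNReal.ofReal_ne_top, ?_⟩
      exact ENNReal.mul_ne_top ENNReal.ofReal_ne_top (hfinw t ht).ne
    have h6 := ENNReal.toReal_mono hrhs h5
    rwa [ENNReal.toReal_add ENNReal.ofReal_ne_top
        (ENNReal.mul_ne_top ENNReal.ofReal_ne_top (hfinw t ht).ne),
      ENNReal.toReal_mul, ENNReal.toReal_ofReal (by positivity),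
      ENNReal.toReal_ofReal (by linarith)] at h6
  have hdiv : b/a ≤ C*t/a + (1+δ) := by
    calc b/a ≤ (C*t + (1+δ)*a)/a := by gcongr
    _ = C*t/a + (1+δ) := by field_simp
  have hCt : C*t/a < δ := by
    have h7 : C/δ < a := lt_of_le_of_lt (le_max_left _ _) ha'
    have h8 : C < a * δ := (div_lt_iff₀ hδ).mp h7
    have h9 : C*t ≤ C := by nlinarith
    calc C*t/a ≤ C/a := by gcongr
    _ < δ := (div_lt_iff₀ ha0).mpr (by linarith)
  have hge1 : 1 ≤ b/a := (one_le_div ha0).mpr hab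
  rw [Real.dist_eq, abs_lt]
  constructor
  · linarith
  · have h10 : b/a < δ + (1+δ) := lt_of_le_of_lt hdiv (by linarith)
    have h11 : δ + (1+δ) = 1 + ε := by rw [hδdef]; ring
    linarith
end
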